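/- In the Kleinberg small-world model KSW(n,d,γ) with 0 ≤ γ ≤ d, there is a constant c_5 (depending only on d and γ) such that for any two distinct vertices u and v, the probability that the random graph contains a long-range edge between u and v is at most c_5·(x̄_1 · x̄_2 ··· x̄_d)^{−γ/d} / f(n'), where (x_1,...,x_d) is the edge vector of (u,v). -/

import Mathlib

open MeasureTheory
open scoped ENNReal

/-- Vertex set of the `d`-dimensional grid with side length `n'` (with wrap-around). -/
abbrev GridV (d n' : ℕ) : Type := Fin d → ZMod n'

instance (d n' : ℕ) : MeasurableSpace (GridV d n') := ⊤

/-- The base grid `B`: `u ~ v` iff they differ by `±1 (mod n')` in exactly one coordinate. -/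
def gridGraph (d n' : ℕ) : SimpleGraph (GridV d n') where
  Adj u v := u ≠ v ∧ ∃ j : Fin d, (v j = u j + 1 ∨ v j = u j - 1) ∧ ∀ i : Fin d, i ≠ j → v i = u i
  symm := by
    constructor
    rintro u v ⟨hne, j, hj, hoth⟩
    refine ⟨hne.symm, j, ?_, fun i hi => (hoth i hi).symm⟩
    rcases hj with h | h
    · right; rw [h]; ring
    · left; rw [h]; ring
  loopless := ⟨fun u h => h.1 rfl⟩

/-- The Kleinberg small-world graph determined by the long-range choices `σ`:
all grid edges, plus the undirected long-range edge `(u, σ u)` for every vertex `u`. -/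
def kswGraph (d n' : ℕ) (σ : GridV d n' → GridV d n') : SimpleGraph (GridV d n') where
  Adj u v := (gridGraph d n').Adj u v ∨ (u ≠ v ∧ (σ u = v ∨ σ v = u))
  symm := by
    constructor
    rintro u v (h | ⟨hne, h⟩)
    · exact Or.inl ((gridGraph d n').adj_symm h)
    · exact Or.inr ⟨hne.symm, h.symm⟩
  loopless := by
    constructor
    rintro u (h | ⟨hne, _⟩)
    · exact (gridGraph d n').loopless.irrefl u h
    · exact hne rfl

/-- The (unnormalized) weight with which `u` picks `v` as its long-range contact:
`d_B(u,v)^{-γ}`, and `0` for `v = u`. -/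
noncomputable def kswWeight (d n' : ℕ) (γ : ℝ) (u v : GridV d n') : ℝ≥0∞ :=
  if v = u then 0 else ((gridGraph d n').dist u v : ℝ≥0∞) ^ (-γ)

/-- The distribution of the long-range contact of a single vertex `u`:
`v` is chosen with probability proportional to `d_B(u,v)^{-γ}`. -/
noncomputable def kswCoordMeasure (d : ℕ) (n' : ℕ+) (γ : ℝ) (u : GridV d n') :
    Measure (GridV d n') :=
  (∑ v : GridV d n', kswWeight d n' γ u v)⁻¹ •
    ∑ v : GridV d n', kswWeight d n' γ u v • Measure.dirac v

/-- The law of the random graph `KSW(n, d, γ)` (with `n = n'^d`), as the product measure of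
the independent long-range choices of all vertices. -/
noncomputable def kswMeasure (d : ℕ) (n' : ℕ+) (γ : ℝ) :
    Measure (GridV d n' → GridV d n') :=
  Measure.pi fun u => kswCoordMeasure d n' γ u

/-- The normalization function `f`: `f(s) = ln s` if `γ = d`, and `f(s) = s^{d-γ}` if `γ < d`. -/
noncomputable def fKSW (d : ℕ) (γ : ℝ) (s : ℕ) : ℝ :=
  if γ = d then Real.log s else (s : ℝ) ^ ((d : ℝ) - γ)

/-- `x̄` for one coordinate of the edge vector: for `z = v i - u i : ZMod n'`, the absolute
value of the representative of `z` in `{-⌊n'/2⌋, …, ⌊(n'-1)/2⌋}`, replaced by `1` when it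
is `0`. -/
def barCoord {n : ℕ} [NeZero n] (z : ZMod n) : ℕ :=
  if z = 0 then 1 else min z.val (-z).val

namespace KSWProof

open SimpleGraph Finset

instance (d n : ℕ) : MeasurableSingletonClass (GridV d n) := ⟨fun _ => trivial⟩

variable {d n : ℕ} {γ : ℝ}

/-- Circle distance of a residue from `0`. -/
def cdist {n : ℕ} [NeZero n] (z : ZMod n) : ℕ := min z.val (-z).val

lemma cdist_eq [NeZero n] (z : ZMod n) : cdist z = min z.val (n - z.val) := by
  unfold cdist
  rw [ZMod.neg_val]
  split_ifs with h
  · simp [h]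
  · rfl

lemma cdist_add_le [NeZero n] (a b : ZMod n) : cdist (a + b) ≤ cdist a + cdist b := by
  have hn : 0 < n := Nat.pos_of_ne_zero (NeZero.ne n)
  have ha := ZMod.val_lt a
  have hb := ZMod.val_lt b
  have hadd : (a + b).val = (a.val + b.val) % n := ZMod.val_add a b
  have h2 : (a.val + b.val) % n = a.val + b.val ∨
      (a.val + b.val) % n = a.val + b.val - n := by
    rcases Nat.lt_or_ge (a.val + b.val) n with h | h
    · exact Or.inl (Nat.mod_eq_of_lt h)
    · right
      rw [Nat.mod_eq_sub_mod h, Nat.mod_eq_of_lt (by omega)]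
  rw [cdist_eq, cdist_eq, cdist_eq, hadd]
  omega

lemma cdist_adj_le [NeZero n] {u w : GridV d n} (h : (gridGraph d n).Adj u w) (i : Fin d) :
    cdist (w i - u i) ≤ 1 := by
  obtain ⟨-, j, hj, hoth⟩ := h
  by_cases hij : i = j
  · subst hij
    rcases hj with h | h
    · have hz : w i - u i = 1 := by rw [h]; ring
      rw [hz]
      calc cdist (1 : ZMod n) ≤ (1 : ZMod n).val := min_le_left _ _
        _ ≤ 1 := by rw [ZMod.val_one_eq_one_mod]; exact Nat.mod_le 1 n
    · have hz : w i - u i = -1 := by rw [h]; ring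
      rw [hz]
      calc cdist (-1 : ZMod n) ≤ (-(-1) : ZMod n).val := min_le_right _ _
        _ ≤ 1 := by rw [neg_neg, ZMod.val_one_eq_one_mod]; exact Nat.mod_le 1 n
  · have hz : w i - u i = 0 := by rw [hoth i hij]; ring
    simp [hz, cdist]

lemma cdist_le_length [NeZero n] {u v : GridV d n} (p : (gridGraph d n).Walk u v) (i : Fin d) :
    cdist (v i - u i) ≤ p.length := by
  induction p with
  | nil => simp [cdist]
  | @cons a b c hab p ih =>
      have h1 : cdist (b i - a i) ≤ 1 := cdist_adj_le hab i
      have hz : c i - a i = (c i - b i) + (b i - a i) := by ring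
      rw [hz, SimpleGraph.Walk.length_cons]
      calc cdist ((c i - b i) + (b i - a i))
          ≤ cdist (c i - b i) + cdist (b i - a i) := cdist_add_le _ _
        _ ≤ p.length + 1 := add_le_add ih h1

lemma exists_walk_le (hn : 2 ≤ n) (u x : GridV d n) :
    ∃ p : (gridGraph d n).Walk u (u + x), p.length ≤ ∑ i, (x i).val := by
  haveI : NeZero n := ⟨by omega⟩
  haveI : Fact (1 < n) := ⟨hn⟩
  generalize hs : ∑ i, (x i).val = s
  induction s generalizing x with
  | zero =>
    have hx : x = 0 := by
      funext i
      have h0 : (x i).val = 0 := by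
        by_contra h
        have : 0 < ∑ i, (x i).val :=
          Finset.sum_pos' (fun _ _ => Nat.zero_le _)
            ⟨i, Finset.mem_univ i, Nat.pos_of_ne_zero h⟩
        omega
      exact (ZMod.val_eq_zero _).mp h0
    subst hx
    exact ⟨(SimpleGraph.Walk.nil).copy rfl (by simp), by simp⟩
  | succ s ih =>
    have hex : ∃ i, x i ≠ 0 := by
      by_contra hc
      push_neg at hc
      have : ∑ i, (x i).val = 0 :=
        Finset.sum_eq_zero (fun i _ => by simp [hc i])
      omega
    obtain ⟨i, hi⟩ := hex
    have hvpos : 1 ≤ (x i).val := ZMod.val_pos.mpr hi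
    have hvlt := ZMod.val_lt (x i)
    set x' := Function.update x i (x i - 1) with hx'
    have hval : (x i - 1).val = (x i).val - 1 := by
      have h1 : ((((x i).val - 1 : ℕ)) : ZMod n) = x i - 1 := by
        rw [Nat.cast_sub hvpos, ZMod.natCast_zmod_val]
        simp
      rw [← h1, ZMod.val_cast_of_lt (by omega)]
    have hsplit := Finset.sum_eq_sum_sdiff_singleton_add (Finset.mem_univ i)
      (fun j => (x j).val)
    have hsplit' := Finset.sum_eq_sum_sdiff_singleton_add (Finset.mem_univ i)
      (fun j => (x' j).val)
    have hagree : ∑ j ∈ Finset.univ \ {i}, (x' j).val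
        = ∑ j ∈ Finset.univ \ {i}, (x j).val := by
      apply Finset.sum_congr rfl
      intro j hj
      have : j ≠ i := by simpa using (Finset.mem_sdiff.mp hj).2
      simp [hx', Function.update_of_ne this]
    have hxi' : x' i = x i - 1 := by simp [hx']
    have hsum : ∑ j, (x' j).val = s := by
      rw [hsplit', hagree, hxi', hval]
      omega
    obtain ⟨p', hp'⟩ := ih x' hsum
    have hne1 : (1 : ZMod n) ≠ 0 := one_ne_zero
    have hadj : (gridGraph d n).Adj (u + x') (u + x) := by
      refine ⟨?_, i, Or.inl ?_, fun j hj => ?_⟩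
      · intro hc
        have hci := congrFun hc i
        simp only [Pi.add_apply, hxi'] at hci
        apply hne1
        have : u i + (x i - 1) = u i + x i := hci
        have h2 : x i - 1 = x i := by
          exact add_left_cancel this
        linear_combination (norm := ring_nf) -h2
      · show (u + x) i = (u + x') i + 1
        simp only [Pi.add_apply, hxi']
        ring
      · show (u + x) j = (u + x') j
        simp [hx', Function.update_of_ne hj]
    exact ⟨p'.concat hadj, by rw [SimpleGraph.Walk.length_concat]; omega⟩

lemma grid_reachable (hn : 2 ≤ n) (u v : GridV d n) : (gridGraph d n).Reachable u v := by
  obtain ⟨p, -⟩ := exists_walk_le hn u (v - u)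
  exact ⟨p.copy rfl (by ring_nf)⟩

lemma dist_le_sum (hn : 2 ≤ n) [NeZero n] (u v : GridV d n) :
    (gridGraph d n).dist u v ≤ ∑ i, (v i - u i).val := by
  obtain ⟨p, hp⟩ := exists_walk_le hn u (v - u)
  have he : u + (v - u) = v := by ring
  calc (gridGraph d n).dist u v ≤ (p.copy rfl he).length := SimpleGraph.dist_le _
    _ = p.length := SimpleGraph.Walk.length_copy _ _ _
    _ ≤ ∑ i, ((v - u) i).val := hp
    _ = ∑ i, (v i - u i).val := by simp

lemma dist_pos (hn : 2 ≤ n) {u v : GridV d n} (hne : u ≠ v) :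
    0 < (gridGraph d n).dist u v :=
  (grid_reachable hn u v).pos_dist_of_ne hne

lemma cdist_le_dist (hn : 2 ≤ n) [NeZero n] (u v : GridV d n) (i : Fin d) :
    cdist (v i - u i) ≤ (gridGraph d n).dist u v := by
  obtain ⟨p, hp⟩ := (grid_reachable hn u v).exists_walk_length_eq_dist
  rw [← hp]
  exact cdist_le_length p i

lemma barCoord_le_dist (hn : 2 ≤ n) [NeZero n] {u v : GridV d n} (hne : u ≠ v) (i : Fin d) :
    barCoord (v i - u i) ≤ (gridGraph d n).dist u v := by
  unfold barCoord
  split_ifs with h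
  · exact dist_pos hn hne
  · exact cdist_le_dist hn u v i

lemma one_le_barCoord [NeZero n] (z : ZMod n) : 1 ≤ barCoord z := by
  unfold barCoord
  split_ifs with h
  · exact le_rfl
  · exact le_min (ZMod.val_pos.mpr h) (ZMod.val_pos.mpr (neg_ne_zero.mpr h))

/-- The box of points whose displacement from `u` has all coordinates with `val < t`. -/
def box [NeZero n] (u : GridV d n) (t : ℕ) : Finset (GridV d n) :=
  Finset.univ.filter (fun w => ∀ i, (w i - u i).val < t)

lemma mem_box [NeZero n] {u w : GridV d n} {t : ℕ} :
    w ∈ box u t ↔ ∀ i, (w i - u i).val < t := by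
  simp [box]

lemma self_mem_box [NeZero n] {u : GridV d n} {t : ℕ} (ht : 0 < t) : u ∈ box u t := by
  rw [mem_box]
  intro i
  simpa using ht

lemma box_mono [NeZero n] {u : GridV d n} {s t : ℕ} (h : s ≤ t) : box u s ⊆ box u t := by
  intro w hw
  rw [mem_box] at hw ⊢
  exact fun i => lt_of_lt_of_le (hw i) h

lemma card_box [NeZero n] (u : GridV d n) {t : ℕ} (ht : t ≤ n) :
    (box u t).card = t ^ d := by
  classical
  have hinj : Function.Injective
      (fun y : Fin d → Fin t => (fun i => u i + ((y i : ℕ) : ZMod n) : GridV d n)) := by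
    intro y₁ y₂ h
    funext i
    have hi := congrFun h i
    simp only at hi
    have : ((y₁ i : ℕ) : ZMod n) = ((y₂ i : ℕ) : ZMod n) := add_left_cancel hi
    have hv : ((y₁ i : ℕ) : ZMod n).val = ((y₂ i : ℕ) : ZMod n).val := by rw [this]
    rw [ZMod.val_cast_of_lt (lt_of_lt_of_le (y₁ i).isLt ht),
      ZMod.val_cast_of_lt (lt_of_lt_of_le (y₂ i).isLt ht)] at hv
    exact Fin.ext hv
  have himg : box u t = Finset.image
      (fun y : Fin d → Fin t => (fun i => u i + ((y i : ℕ) : ZMod n) : GridV d n))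
      Finset.univ := by
    ext w
    rw [mem_box, Finset.mem_image]
    constructor
    · intro h
      refine ⟨fun i => ⟨(w i - u i).val, h i⟩, Finset.mem_univ _, ?_⟩
      funext i
      simp only [ZMod.natCast_zmod_val]
      ring
    · rintro ⟨y, -, rfl⟩ i
      have hz : (u i + ((y i : ℕ) : ZMod n)) - u i = ((y i : ℕ) : ZMod n) := by ring
      rw [hz, ZMod.val_cast_of_lt (lt_of_lt_of_le (y i).isLt ht)]
      exact (y i).isLt
  rw [himg, Finset.card_image_of_injective _ hinj, Finset.card_univ]
  simp [Fintype.card_fun]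

lemma weight_eq (hn : 2 ≤ n) {u w : GridV d n} (hw : w ≠ u) :
    kswWeight d n γ u w
      = ENNReal.ofReal (((gridGraph d n).dist u w : ℝ) ^ (-γ)) := by
  rw [kswWeight, if_neg hw]
  have hD : 0 < (gridGraph d n).dist u w := dist_pos hn (Ne.symm hw)
  have hD' : (0:ℝ) < ((gridGraph d n).dist u w : ℝ) := by exact_mod_cast hD
  rw [← ENNReal.ofReal_rpow_of_pos hD', ENNReal.ofReal_natCast]

lemma weight_le_one (hn : 2 ≤ n) (hγ0 : 0 ≤ γ) (u w : GridV d n) :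
    kswWeight d n γ u w ≤ 1 := by
  by_cases hw : w = u
  · simp [kswWeight, hw]
  · rw [weight_eq hn hw]
    have hD : 0 < (gridGraph d n).dist u w := dist_pos hn (Ne.symm hw)
    have h1 : (1:ℝ) ≤ ((gridGraph d n).dist u w : ℝ) := by exact_mod_cast hD
    rw [← ENNReal.ofReal_one]
    exact ENNReal.ofReal_le_ofReal
      (Real.rpow_le_one_of_one_le_of_nonpos h1 (neg_nonpos.mpr hγ0))

lemma Z_ne_top (hn : 2 ≤ n) [NeZero n] (hγ0 : 0 ≤ γ) (u : GridV d n) :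
    ∑ w : GridV d n, kswWeight d n γ u w ≠ ⊤ := by
  refine ne_top_of_le_ne_top ?_ (Finset.sum_le_sum (fun w _ => weight_le_one hn hγ0 u w))
  simp [Finset.sum_const]

lemma sum_weight_ge (hn : 2 ≤ n) [NeZero n] (hγ0 : 0 ≤ γ) (u : GridV d n)
    (S : Finset (GridV d n)) (hu : u ∉ S) {m : ℕ} (hm : 1 ≤ m)
    (hS : ∀ w ∈ S, (gridGraph d n).dist u w ≤ m) :
    ENNReal.ofReal (S.card * (m:ℝ) ^ (-γ)) ≤ ∑ w ∈ S, kswWeight d n γ u w := by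
  have key : ∀ w ∈ S, ENNReal.ofReal ((m:ℝ) ^ (-γ)) ≤ kswWeight d n γ u w := by
    intro w hw
    have hwne : w ≠ u := fun h => hu (h ▸ hw)
    rw [weight_eq hn hwne]
    apply ENNReal.ofReal_le_ofReal
    have hD : 0 < (gridGraph d n).dist u w := dist_pos hn (Ne.symm hwne)
    exact Real.rpow_le_rpow_of_nonpos (by exact_mod_cast hD)
      (by exact_mod_cast hS w hw) (neg_nonpos.mpr hγ0)
  calc ENNReal.ofReal (S.card * (m:ℝ) ^ (-γ))
      = ∑ _w ∈ S, ENNReal.ofReal ((m:ℝ) ^ (-γ)) := by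
        rw [Finset.sum_const, nsmul_eq_mul,
          ENNReal.ofReal_mul (by positivity), ENNReal.ofReal_natCast]
    _ ≤ ∑ w ∈ S, kswWeight d n γ u w := Finset.sum_le_sum key

lemma sum_weight_ge' (hn : 2 ≤ n) [NeZero n] (hγ0 : 0 ≤ γ) (u : GridV d n)
    (S : Finset (GridV d n)) (hu : u ∉ S) {m : ℕ} (hm : 1 ≤ m)
    (hS : ∀ w ∈ S, (gridGraph d n).dist u w ≤ m) :
    ENNReal.ofReal (S.card * (m:ℝ) ^ (-γ)) ≤ ∑ w : GridV d n, kswWeight d n γ u w :=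
  le_trans (sum_weight_ge hn hγ0 u S hu hm hS)
    (Finset.sum_le_sum_of_subset (Finset.subset_univ S))

lemma dist_le_of_mem_box (hn : 2 ≤ n) [NeZero n] {u : GridV d n} {t : ℕ}
    {w : GridV d n} (hw : w ∈ box u t) :
    (gridGraph d n).dist u w ≤ d * t := by
  calc (gridGraph d n).dist u w ≤ ∑ i, (w i - u i).val := dist_le_sum hn u w
    _ ≤ ∑ _i : Fin d, t := Finset.sum_le_sum (fun i _ => le_of_lt (mem_box.mp hw i))
    _ = d * t := by simp [mul_comm]

/-- Lower bound on the normalizing constant, case `γ < d` (used for `γ ≤ d`). -/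
lemma Z_ge_pow (hd : 1 ≤ d) (hn : 2 ≤ n) [NeZero n] (hγ0 : 0 ≤ γ) (hγd : γ ≤ d)
    (u : GridV d n) :
    ENNReal.ofReal ((2:ℝ) ^ (-(d:ℝ)-1) * (d:ℝ) ^ (-γ) * (n:ℝ) ^ ((d:ℝ)-γ))
      ≤ ∑ w : GridV d n, kswWeight d n γ u w := by
  set m := n / 2 with hmdef
  have hm1 : 1 ≤ m := by omega
  have ht : m + 1 ≤ n := by omega
  set S := (box u (m+1)).erase u with hS
  have hcard : S.card = (m+1)^d - 1 := by
    rw [hS, Finset.card_erase_of_mem (self_mem_box (by omega)), card_box u ht]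
  have hdm1 : 1 ≤ d * (m+1) := Nat.one_le_iff_ne_zero.mpr (by positivity)
  refine le_trans ?_ (sum_weight_ge' hn hγ0 u S (Finset.notMem_erase u _) hdm1 ?_)
  · apply ENNReal.ofReal_le_ofReal
    have hpow1 : (2:ℝ) ≤ ((m:ℝ)+1)^d := by
      calc (2:ℝ) = 2^1 := by norm_num
        _ ≤ 2^d := by
            apply pow_le_pow_right₀ (by norm_num) hd
        _ ≤ ((m:ℝ)+1)^d := by
            apply pow_le_pow_left₀ (by norm_num)
            have : (1:ℝ) ≤ (m:ℝ) := by exact_mod_cast hm1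
            linarith
    have hcard' : ((m:ℝ)+1)^d / 2 ≤ (S.card : ℝ) := by
      rw [hcard]
      have h1 : (1:ℕ) ≤ (m+1)^d := Nat.one_le_pow _ _ (by omega)
      rw [Nat.cast_sub h1]
      push_cast
      linarith
    have hn2 : (n:ℝ) / 2 ≤ (m:ℝ) + 1 := by
      have : n ≤ 2 * (m + 1) := by omega
      have := (Nat.cast_le (α := ℝ)).mpr this
      push_cast at this
      linarith
    have hnpos : (0:ℝ) < n := by positivity
    have hdpos : (0:ℝ) < d := by exact_mod_cast hd
    have hrpow : ((d:ℝ) * n) ^ (-γ) ≤ ((d * (m+1) : ℕ) : ℝ) ^ (-γ) := by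
      apply Real.rpow_le_rpow_of_nonpos
      · positivity
      · push_cast
        have : (m:ℝ) + 1 ≤ (n:ℝ) := by exact_mod_cast ht
        nlinarith
      · exact neg_nonpos.mpr hγ0
    calc (2:ℝ) ^ (-(d:ℝ)-1) * (d:ℝ) ^ (-γ) * (n:ℝ) ^ ((d:ℝ)-γ)
        = ((n:ℝ)/2)^d / 2 * ((d:ℝ) * n) ^ (-γ) := by
          have e1 : ((d:ℝ) * n) ^ (-γ) = (d:ℝ)^(-γ) * (n:ℝ)^(-γ) :=
            Real.mul_rpow (le_of_lt hdpos) (le_of_lt hnpos)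
          have e2 : (n:ℝ) ^ ((d:ℝ)-γ) = (n:ℝ)^(d:ℝ) * (n:ℝ)^(-γ) := by
            rw [← Real.rpow_add hnpos]; ring_nf
          have e3 : (2:ℝ) ^ (-(d:ℝ)-1) = ((2:ℝ)^(d:ℝ) * 2)⁻¹ := by
            rw [show -(d:ℝ)-1 = -((d:ℝ)+1) by ring, Real.rpow_neg (by norm_num),
              Real.rpow_add (by norm_num : (0:ℝ)<2), Real.rpow_one]
          have e4 : (n:ℝ)^(d:ℝ) = (n:ℝ)^d := Real.rpow_natCast _ d
          have e5 : (2:ℝ)^(d:ℝ) = (2:ℝ)^d := Real.rpow_natCast _ d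
          have h2d : (0:ℝ) < (2:ℝ)^d := by positivity
          rw [e1, e2, e3, e4, e5, div_pow]
          field_simp
      _ ≤ (S.card : ℝ) * ((d * (m+1) : ℕ) : ℝ) ^ (-γ) := by
          apply mul_le_mul ?_ hrpow (by positivity) (by positivity)
          calc ((n:ℝ)/2)^d / 2 ≤ ((m:ℝ)+1)^d / 2 := by gcongr
            _ ≤ (S.card : ℝ) := hcard'
  · intro w hw
    exact dist_le_of_mem_box hn (Finset.mem_of_mem_erase hw)

lemma box_zero_eq [NeZero n] (u : GridV d n) : box u 1 = {u} := by
  ext w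
  rw [mem_box, Finset.mem_singleton]
  constructor
  · intro h
    funext i
    have : (w i - u i).val = 0 := by have := h i; omega
    have : w i - u i = 0 := (ZMod.val_eq_zero _).mp this
    linear_combination (norm := ring_nf) this
  · rintro rfl i
    simp

/-- Lower bound on the normalizing constant, case `γ = d`. -/
lemma Z_ge_log (hd : 1 ≤ d) (hn : 2 ≤ n) [NeZero n] (u : GridV d n) :
    ENNReal.ofReal ((Real.log 2 * 2)⁻¹ * ((2*d:ℝ)) ^ (-(d:ℝ)) * Real.log n)
      ≤ ∑ w : GridV d n, kswWeight d n (d:ℝ) u w := by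
  set c : ℝ := ((2*d:ℝ)) ^ (-(d:ℝ)) with hc
  have hdpos : (0:ℝ) < d := by exact_mod_cast hd
  have hcpos : 0 < c := by rw [hc]; positivity
  set K := Nat.log 2 n with hK
  have hK1 : 1 ≤ K := Nat.log_pos (by norm_num) hn
  -- main induction
  have main : ∀ k, k ≤ K →
      ENNReal.ofReal ((k:ℝ) * c) ≤ ∑ w ∈ box u (2^k), kswWeight d n (d:ℝ) u w := by
    intro k
    induction k with
    | zero =>
      intro _
      simp [pow_zero, box_zero_eq, kswWeight]
    | succ k ih =>
      intro hk1
      have hk : k ≤ K := by omega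
      have hpow : 2^(k+1) ≤ n := Nat.pow_le_of_le_log (by omega) hk1
      have hsub : box u (2^k) ⊆ box u (2^(k+1)) :=
        box_mono (Nat.pow_le_pow_right (by norm_num) (by omega))
      set S := box u (2^(k+1)) \ box u (2^k) with hSdef
      have husub : u ∉ S := by
        rw [hSdef, Finset.mem_sdiff]
        push_neg
        intro _
        exact self_mem_box (by positivity)
      have hcardS : S.card = (2^(k+1))^d - (2^k)^d := by
        rw [hSdef, Finset.card_sdiff_of_subset hsub, card_box u hpow,
          card_box u (le_trans (Nat.pow_le_pow_right (by norm_num) (by omega)) hpow)]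
      have hdm1 : 1 ≤ d * 2^(k+1) := Nat.one_le_iff_ne_zero.mpr (by positivity)
      have hshell : ENNReal.ofReal (c) ≤ ∑ w ∈ S, kswWeight d n (d:ℝ) u w := by
        refine le_trans ?_ (sum_weight_ge hn (le_of_lt hdpos) u S husub hdm1 ?_)
        · apply ENNReal.ofReal_le_ofReal
          have hcard' : ((2:ℝ)^k)^d ≤ (S.card : ℝ) := by
            rw [hcardS]
            have hle : (2^k)^d ≤ (2^(k+1))^d :=
              Nat.pow_le_pow_left (Nat.pow_le_pow_right (by norm_num) (by omega)) d
            rw [Nat.cast_sub hle]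
            push_cast
            have h2 : ((2:ℝ)^k)^d * 2 ≤ ((2:ℝ)^(k+1))^d := by
              have : ((2:ℝ)^(k+1))^d = ((2:ℝ)^k)^d * 2^d := by ring
              rw [this]
              have h1 : (2:ℝ) ≤ 2^d := by
                calc (2:ℝ) = 2^1 := by norm_num
                  _ ≤ 2^d := pow_le_pow_right₀ (by norm_num) hd
              nlinarith [pow_pos (pow_pos (by norm_num : (0:ℝ) < 2) k) d]
            linarith
          have heq : ((d * 2^(k+1) : ℕ) : ℝ) ^ (-(d:ℝ))
              = c * (((2:ℝ)^k)^d)⁻¹ := by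
            have hb : ((d * 2^(k+1) : ℕ) : ℝ) = (2*d) * 2^k := by
              push_cast; ring
            rw [hb, Real.rpow_neg (by positivity), hc, Real.rpow_neg (by positivity),
              Real.mul_rpow (by positivity) (by positivity), ← Real.rpow_natCast ((2:ℝ)^k) d,
              mul_inv]
          rw [heq]
          have hpk : (0:ℝ) < ((2:ℝ)^k)^d := by positivity
          calc c = c * (((2:ℝ)^k)^d * (((2:ℝ)^k)^d)⁻¹) := by
                rw [mul_inv_cancel₀ (ne_of_gt hpk), mul_one]
            _ = ((2:ℝ)^k)^d * (c * (((2:ℝ)^k)^d)⁻¹) := by ring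
            _ ≤ (S.card : ℝ) * (c * (((2:ℝ)^k)^d)⁻¹) := by
                apply mul_le_mul_of_nonneg_right hcard'
                positivity
        · intro w hw
          exact dist_le_of_mem_box hn (Finset.mem_sdiff.mp hw).1
      have hsum : ∑ w ∈ box u (2^(k+1)), kswWeight d n (d:ℝ) u w
          = ∑ w ∈ box u (2^k), kswWeight d n (d:ℝ) u w
            + ∑ w ∈ S, kswWeight d n (d:ℝ) u w := by
        rw [hSdef, eq_comm, add_comm]
        exact Finset.sum_sdiff hsub
      rw [hsum]
      push_cast
      calc ENNReal.ofReal (((k:ℝ)+1) * c)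
          = ENNReal.ofReal ((k:ℝ) * c + c) := by ring_nf
        _ ≤ ENNReal.ofReal ((k:ℝ) * c) + ENNReal.ofReal c :=
            ENNReal.ofReal_add_le
        _ ≤ _ := add_le_add (ih hk) hshell
  have hbox : box u (2^K) ⊆ Finset.univ := Finset.subset_univ _
  refine le_trans ?_ (le_trans (main K le_rfl)
    (Finset.sum_le_sum_of_subset hbox))
  apply ENNReal.ofReal_le_ofReal
  have hlog2 : (0:ℝ) < Real.log 2 := Real.log_pos (by norm_num)
  have hlogn : Real.log n ≤ 2 * K * Real.log 2 := by
    have h1 : n < 2^(K+1) := Nat.lt_pow_succ_log_self (by norm_num) n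
    have h2 : (2:ℕ)^(K+1) ≤ 2^(2*K) := Nat.pow_le_pow_right (by norm_num) (by omega)
    have h3 : (n:ℝ) ≤ (2:ℝ)^(2*K) := by
      have : (n:ℝ) < ((2^(K+1) : ℕ) : ℝ) := by exact_mod_cast h1
      calc (n:ℝ) ≤ ((2^(K+1) : ℕ) : ℝ) := le_of_lt this
        _ ≤ ((2^(2*K) : ℕ) : ℝ) := by exact_mod_cast h2
        _ = (2:ℝ)^(2*K) := by push_cast; ring
    calc Real.log n ≤ Real.log ((2:ℝ)^(2*K)) :=
          Real.log_le_log (by positivity) h3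
      _ = (2*K) * Real.log 2 := by rw [Real.log_pow]; push_cast; ring
  calc (Real.log 2 * 2)⁻¹ * c * Real.log n
      ≤ (Real.log 2 * 2)⁻¹ * c * (2 * K * Real.log 2) := by
        apply mul_le_mul_of_nonneg_left hlogn (by positivity)
    _ = (K:ℝ) * c := by field_simp
  -- done

lemma coord_apply_singleton (n' : ℕ+) (γ : ℝ) (u v : GridV d n') :
    kswCoordMeasure d n' γ u {v}
      = (∑ w : GridV d n', kswWeight d n' γ u w)⁻¹ * kswWeight d n' γ u v := by
  rw [kswCoordMeasure, Measure.smul_apply, Measure.finset_sum_apply, smul_eq_mul]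
  congr 1
  rw [Finset.sum_eq_single v]
  · rw [Measure.smul_apply, Measure.dirac_apply, smul_eq_mul]
    simp
  · intro w _ hw
    rw [Measure.smul_apply, Measure.dirac_apply, smul_eq_mul]
    simp [Set.indicator_apply, hw]
  · intro h
    exact absurd (Finset.mem_univ v) h

end KSWProof

/-- In `KSW(n,d,γ)` with `0 ≤ γ ≤ d`, there is a constant `c₅` (depending
only on `d` and `γ`) such that for any two distinct vertices `u,v`, the probability that the
random graph contains a long-range edge between `u` and `v` is at most
`c₅ (x̄₁ ⋯ x̄_d)^(-γ/d) / f(n')`, where `(x₁,…,x_d)` is the edge vector of `(u,v)`. -/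
theorem ksw_prob_long_range_edge (d : ℕ) (hd : 1 ≤ d) (γ : ℝ) (hγ0 : 0 ≤ γ)
    (hγd : γ ≤ d) :
    ∃ c₅ : ℝ, 0 < c₅ ∧
      ∀ (n' : ℕ+) (u v : GridV d n'), u ≠ v →
        kswMeasure d n' γ {σ | σ u = v ∨ σ v = u} ≤
          ENNReal.ofReal
            (c₅ * (∏ i : Fin d, (barCoord (v i - u i) : ℝ)) ^ (-(γ / d)) / fKSW d γ n') := by
  classical
  open KSWProof in
  have hdpos : (0:ℝ) < d := by exact_mod_cast hd
  have hlog2 : (0:ℝ) < Real.log 2 := Real.log_pos (by norm_num)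
  set cf : ℝ := if γ = (d:ℝ) then (Real.log 2 * 2)⁻¹ * ((2*(d:ℝ))) ^ (-(d:ℝ))
    else (2:ℝ) ^ (-(d:ℝ)-1) * (d:ℝ) ^ (-γ) with hcf
  have hcfpos : 0 < cf := by
    rw [hcf]; split_ifs
    · positivity
    · positivity
  refine ⟨2 / cf, by positivity, ?_⟩
  intro n' u v huv
  haveI : NeZero ((n' : ℕ)) := ⟨n'.ne_zero⟩
  rcases le_or_gt (n' : ℕ) 1 with h1 | h1
  · exfalso
    apply huv
    funext i
    have h1' : ((n':ℕ)) = 1 := le_antisymm h1 n'.one_le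
    have hu := ZMod.val_lt (u i)
    have hv := ZMod.val_lt (v i)
    have hval : (u i).val = (v i).val := by omega
    exact ZMod.val_injective _ hval
  have hn : 2 ≤ (n' : ℕ) := h1
  have hf : 0 < fKSW d γ n' := by
    rw [fKSW]; split_ifs with h
    · exact Real.log_pos (by exact_mod_cast hn)
    · positivity
  have hZlow : ∀ w : GridV d n',
      ENNReal.ofReal (cf * fKSW d γ n') ≤ ∑ z : GridV d n', kswWeight d n' γ w z := by
    intro w
    by_cases h : γ = (d:ℝ)
    · have h2 : cf * fKSW d γ n'
          = (Real.log 2 * 2)⁻¹ * ((2*(d:ℝ))) ^ (-(d:ℝ)) * Real.log (n':ℕ) := by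
        rw [hcf, if_pos h, fKSW, if_pos h]
      rw [h2, h]
      exact Z_ge_log hd hn w
    · have h2 : cf * fKSW d γ n'
          = (2:ℝ) ^ (-(d:ℝ)-1) * (d:ℝ) ^ (-γ) * ((n':ℕ) : ℝ) ^ ((d:ℝ) - γ) := by
        rw [hcf, if_neg h, fKSW, if_neg h]
      rw [h2]
      exact Z_ge_pow hd hn hγ0 hγd w
  have hcff : 0 < cf * fKSW d γ n' := mul_pos hcfpos hf
  have hZ0 : ∀ w : GridV d n', (∑ z : GridV d n', kswWeight d n' γ w z) ≠ 0 := fun w =>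
    ne_of_gt (lt_of_lt_of_le (ENNReal.ofReal_pos.mpr hcff) (hZlow w))
  have hZt : ∀ w : GridV d n', (∑ z : GridV d n', kswWeight d n' γ w z) ≠ ⊤ := fun w =>
    Z_ne_top hn hγ0 w
  haveI hprob : ∀ w : GridV d n', IsProbabilityMeasure (kswCoordMeasure d n' γ w) := by
    intro w
    constructor
    rw [kswCoordMeasure, Measure.smul_apply, Measure.finset_sum_apply, smul_eq_mul]
    have hrw : ∑ z : GridV d n', (kswWeight d n' γ w z • Measure.dirac z) Set.univ
        = ∑ z : GridV d n', kswWeight d n' γ w z := by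
      apply Finset.sum_congr rfl
      intro z _
      rw [Measure.smul_apply, smul_eq_mul, Measure.dirac_apply]
      simp
    rw [hrw, ENNReal.inv_mul_cancel (hZ0 w) (hZt w)]
  have hev : {σ : GridV d n' → GridV d n' | σ u = v ∨ σ v = u}
      = {σ : GridV d n' → GridV d n' | σ u = v} ∪ {σ : GridV d n' → GridV d n' | σ v = u} :=
    Set.setOf_or
  have heval : ∀ (a b : GridV d n'),
      kswMeasure d n' γ {σ : GridV d n' → GridV d n' | σ a = b}
        = kswCoordMeasure d n' γ a {b} := by
    intro a b
    have hset : {σ : GridV d n' → GridV d n' | σ a = b}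
        = Set.univ.pi (Function.update (fun _ => (Set.univ : Set (GridV d n'))) a {b}) := by
      rw [Set.univ_pi_update_univ]
      rfl
    rw [kswMeasure, hset, Measure.pi_pi]
    rw [Finset.prod_eq_single a]
    · rw [Function.update_self]
    · intro w _ hw
      rw [Function.update_of_ne hw]
      exact measure_univ
    · intro h
      exact absurd (Finset.mem_univ a) h
  set D := (gridGraph d (n':ℕ)).dist u v with hDdef
  have hDpos : 0 < D := dist_pos hn huv
  have hD1 : (1:ℝ) ≤ (D:ℝ) := by exact_mod_cast hDpos
  have hwuv : kswWeight d n' γ u v = ENNReal.ofReal ((D:ℝ) ^ (-γ)) :=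
    weight_eq hn (Ne.symm huv)
  have hwvu : kswWeight d n' γ v u = ENNReal.ofReal ((D:ℝ) ^ (-γ)) := by
    rw [weight_eq hn huv, SimpleGraph.dist_comm]
  have hDrp : (0:ℝ) < (D:ℝ) ^ (-γ) := by positivity
  have hone : ∀ (a b : GridV d n'),
      kswWeight d n' γ a b = ENNReal.ofReal ((D:ℝ)^(-γ)) →
      kswCoordMeasure d n' γ a {b}
        ≤ ENNReal.ofReal ((cf * fKSW d γ n')⁻¹ * (D:ℝ) ^ (-γ)) := by
    intro a b hab
    rw [coord_apply_singleton, hab]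
    rw [ENNReal.ofReal_mul (by positivity), ENNReal.ofReal_inv_of_pos hcff]
    exact mul_le_mul' (ENNReal.inv_le_inv' (hZlow a)) le_rfl
  calc kswMeasure d n' γ {σ | σ u = v ∨ σ v = u}
      ≤ kswMeasure d n' γ {σ : GridV d n' → GridV d n' | σ u = v}
        + kswMeasure d n' γ {σ : GridV d n' → GridV d n' | σ v = u} := by
        rw [hev]; exact measure_union_le _ _
    _ = kswCoordMeasure d n' γ u {v} + kswCoordMeasure d n' γ v {u} := by
        rw [heval, heval]
    _ ≤ ENNReal.ofReal ((cf * fKSW d γ n')⁻¹ * (D:ℝ) ^ (-γ))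
        + ENNReal.ofReal ((cf * fKSW d γ n')⁻¹ * (D:ℝ) ^ (-γ)) :=
        add_le_add (hone u v hwuv) (hone v u hwvu)
    _ = ENNReal.ofReal (2 * ((cf * fKSW d γ n')⁻¹ * (D:ℝ) ^ (-γ))) := by
        rw [← ENNReal.ofReal_add (by positivity) (by positivity)]
        ring_nf
    _ ≤ ENNReal.ofReal
          (2 / cf * (∏ i : Fin d, (barCoord (v i - u i) : ℝ)) ^ (-(γ / d)) / fKSW d γ n') := by
        apply ENNReal.ofReal_le_ofReal
        set P : ℝ := ∏ i : Fin d, (barCoord (v i - u i) : ℝ) with hP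
        have hP1 : (1:ℝ) ≤ P := by
          rw [hP]
          calc (1:ℝ) = ∏ _i : Fin d, (1:ℝ) := by simp
            _ ≤ ∏ i : Fin d, (barCoord (v i - u i) : ℝ) :=
                Finset.prod_le_prod (fun i _ => by norm_num)
                  (fun i _ => by exact_mod_cast one_le_barCoord (v i - u i))
        have hPpos : (0:ℝ) < P := lt_of_lt_of_le zero_lt_one hP1
        have hPD : P ≤ (D:ℝ) ^ (d:ℝ) := by
          rw [Real.rpow_natCast, hP]
          calc ∏ i : Fin d, (barCoord (v i - u i) : ℝ)
              ≤ ∏ _i : Fin d, (D:ℝ) :=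
                Finset.prod_le_prod (fun i _ => by positivity)
                  (fun i _ => by exact_mod_cast barCoord_le_dist hn huv i)
            _ = (D:ℝ)^d := by simp [Finset.prod_const]
        have hkey : (D:ℝ) ^ (-γ) ≤ P ^ (-(γ/d)) := by
          have h1 : ((D:ℝ) ^ (d:ℝ)) ^ (-(γ/d)) = (D:ℝ) ^ (-γ) := by
            rw [← Real.rpow_mul (by positivity)]
            congr 1
            field_simp
          rw [← h1]
          exact Real.rpow_le_rpow_of_nonpos hPpos hPD
            (neg_nonpos.mpr (by positivity))
        have hPrp : (0:ℝ) < P ^ (-(γ/d)) := by positivity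
        calc 2 * ((cf * fKSW d γ n')⁻¹ * (D:ℝ) ^ (-γ))
            ≤ 2 * ((cf * fKSW d γ n')⁻¹ * P ^ (-(γ/d))) := by
              apply mul_le_mul_of_nonneg_left ?_ (by norm_num)
              exact mul_le_mul_of_nonneg_left hkey (by positivity)
          _ = 2 / cf * P ^ (-(γ/d)) / fKSW d γ n' := by
              field_simp
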